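/- Suppose f ∈ C(X,ℝ) admits two f-maximizing measures μ₁ ≠ μ₂ and g ∈ C(X,ℝ) satisfies ∫ g dμ₁ ≠ ∫ g dμ₂. Then the one-sided derivatives of τ ↦ β(f + τ·g) at τ = 0 disagree: liminf_{τ → 0⁺} (β(f + τ·g) − β(f))/τ > limsup_{τ → 0⁻} (β(f + τ·g) − β(f))/τ; in particular the function τ ↦ β(f + τ·g) is not differentiable at τ = 0. -/

import Mathlib

open MeasureTheory Topology Filter
open scoped NNReal

variable {X : Type*} [MetricSpace X] [CompactSpace X] [Nonempty X]
  [MeasurableSpace X] [BorelSpace X]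

/-- The set of `T`-invariant Borel probability measures on `X`,
equipped (as a subtype) with the weak* topology. -/
def Minv (T : X → X) : Set (ProbabilityMeasure X) :=
  {μ | (μ : Measure X).map T = (μ : Measure X)}

/-- The integral of a continuous function against a probability measure. -/
noncomputable def intf (f : C(X, ℝ)) (μ : ProbabilityMeasure X) : ℝ :=
  ∫ x, f x ∂(μ : Measure X)

/-- The maximum ergodic average `β(f) = sup {∫ f dμ : μ ∈ M}`. -/
noncomputable def beta (T : X → X) (f : C(X, ℝ)) : ℝ :=
  sSup (intf f '' Minv T)

/-- The set of `f`-maximizing measures. -/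
def MMax (T : X → X) (f : C(X, ℝ)) : Set (ProbabilityMeasure X) :=
  {μ ∈ Minv T | intf f μ = beta T f}

lemma integrable_cm (f : C(X, ℝ)) (μ : ProbabilityMeasure X) :
    Integrable f (μ : Measure X) :=
  f.continuous.integrable_of_hasCompactSupport (HasCompactSupport.of_compactSpace f)

lemma intf_add_smul (f g : C(X, ℝ)) (τ : ℝ) (μ : ProbabilityMeasure X) :
    intf (f + τ • g) μ = intf f μ + τ * intf g μ := by
  unfold intf
  simp only [ContinuousMap.add_apply, ContinuousMap.smul_apply, smul_eq_mul]
  rw [integral_add (integrable_cm f μ) ((integrable_cm g μ).const_mul τ),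
    MeasureTheory.integral_const_mul]

lemma abs_intf_le (f : C(X, ℝ)) (μ : ProbabilityMeasure X) : |intf f μ| ≤ ‖f‖ := by
  have := norm_integral_le_of_norm_le_const (μ := (μ : Measure X)) (f := fun x => f x)
    (C := ‖f‖) (Eventually.of_forall fun x => f.norm_coe_le_norm x)
  simpa [intf] using this

lemma bddAbove_intf (T : X → X) (f : C(X, ℝ)) : BddAbove (intf f '' Minv T) := by
  refine ⟨‖f‖, ?_⟩
  rintro x ⟨μ, -, rfl⟩
  exact (abs_le.mp (abs_intf_le f μ)).2

lemma le_beta (T : X → X) (f : C(X, ℝ)) {μ : ProbabilityMeasure X} (hμ : μ ∈ Minv T) :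
    intf f μ ≤ beta T f :=
  le_csSup (bddAbove_intf T f) ⟨μ, hμ, rfl⟩

lemma beta_le (T : X → X) (hM : (Minv T).Nonempty) (f : C(X, ℝ)) {c : ℝ}
    (h : ∀ μ ∈ Minv T, intf f μ ≤ c) : beta T f ≤ c :=
  csSup_le (hM.image _) (by rintro x ⟨μ, hμ, rfl⟩; exact h μ hμ)

lemma key (T : X → X) (hM : (Minv T).Nonempty) (f g : C(X, ℝ))
    (ν₁ ν₂ : ProbabilityMeasure X) (h₁ : ν₁ ∈ MMax T f) (h₂ : ν₂ ∈ MMax T f)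
    (hlt : intf g ν₁ < intf g ν₂) :
    limsup (fun τ : ℝ => (beta T (f + τ • g) - beta T f) / τ) (𝓝[<] 0) <
      liminf (fun τ : ℝ => (beta T (f + τ • g) - beta T f) / τ) (𝓝[>] 0) := by
  set a := intf g ν₁
  set b := intf g ν₂
  set u : ℝ → ℝ := fun τ => (beta T (f + τ • g) - beta T f) / τ with hu
  -- lower bound for β(f+τg)
  have hlow : ∀ (τ : ℝ) (ν : ProbabilityMeasure X), ν ∈ MMax T f →
      beta T f + τ * intf g ν ≤ beta T (f + τ • g) := by
    intro τ ν hν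
    have := le_beta T (f + τ • g) hν.1
    rw [intf_add_smul, hν.2] at this
    exact this
  -- upper bound for β(f+τg)
  have hup : ∀ τ : ℝ, beta T (f + τ • g) ≤ beta T f + |τ| * ‖g‖ := by
    intro τ
    refine beta_le T hM _ fun μ hμ => ?_
    rw [intf_add_smul]
    have e1 : intf f μ ≤ beta T f := le_beta T f hμ
    have e2 : τ * intf g μ ≤ |τ| * ‖g‖ :=
      calc τ * intf g μ ≤ |τ * intf g μ| := le_abs_self _
        _ = |τ| * |intf g μ| := abs_mul _ _
        _ ≤ |τ| * ‖g‖ := mul_le_mul_of_nonneg_left (abs_intf_le g μ) (abs_nonneg _)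
    linarith
  -- |u τ| ≤ ‖g‖ for τ ≠ 0
  have habs : ∀ τ : ℝ, τ ≠ 0 → |u τ| ≤ ‖g‖ := by
    intro τ hτ
    have h1 : beta T (f + τ • g) - beta T f ≤ |τ| * ‖g‖ := by
      have := hup τ; linarith
    have h2 : -(|τ| * ‖g‖) ≤ beta T (f + τ • g) - beta T f := by
      have := hlow τ ν₁ h₁
      have h3 : -(|τ| * ‖g‖) ≤ τ * a := by
        have : |τ * a| ≤ |τ| * ‖g‖ := by
          rw [abs_mul]
          exact mul_le_mul_of_nonneg_left (abs_intf_le g ν₁) (abs_nonneg _)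
        have := neg_abs_le (τ * a)
        linarith
      linarith
    rw [hu, abs_div, div_le_iff₀ (abs_pos.mpr hτ)]
    rw [mul_comm]
    exact abs_le.mpr ⟨h2, h1⟩
  -- pointwise bounds on u
  have hpos : ∀ τ : ℝ, 0 < τ → b ≤ u τ := by
    intro τ hτ
    rw [hu, le_div_iff₀ hτ]
    have := hlow τ ν₂ h₂
    linarith
  have hneg : ∀ τ : ℝ, τ < 0 → u τ ≤ a := by
    intro τ hτ
    rw [hu, div_le_iff_of_neg hτ]
    have := hlow τ ν₁ h₁
    linarith
  have hmemneg : ∀ᶠ τ : ℝ in 𝓝[<] 0, τ < 0 :=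
    eventually_mem_nhdsWithin.mono fun τ hτ => hτ
  have hmempos : ∀ᶠ τ : ℝ in 𝓝[>] 0, 0 < τ :=
    eventually_mem_nhdsWithin.mono fun τ hτ => hτ
  have hbd1 : IsBoundedUnder (· ≥ ·) (𝓝[<] (0:ℝ)) u :=
    ⟨-‖g‖, hmemneg.mono fun τ hτ => (abs_le.mp (habs τ hτ.ne)).1⟩
  have hbd2 : IsBoundedUnder (· ≤ ·) (𝓝[>] (0:ℝ)) u :=
    ⟨‖g‖, hmempos.mono fun τ hτ => (abs_le.mp (habs τ hτ.ne')).2⟩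
  have hls : limsup u (𝓝[<] 0) ≤ a :=
    limsup_le_of_le hbd1.isCoboundedUnder_le (hmemneg.mono fun τ hτ => hneg τ hτ)
  have hli : b ≤ liminf u (𝓝[>] 0) :=
    le_liminf_of_le hbd2.isCoboundedUnder_ge (hmempos.mono fun τ hτ => hpos τ hτ)
  exact lt_of_le_of_lt hls (lt_of_lt_of_le hlt hli)

/-- If `f` has two maximizing measures separated by `g`, then the one-sided derivatives of
`τ ↦ β(f + τ g)` at `0` disagree, and in particular this map is not differentiable at `0`. -/
theorem beta_not_differentiable_of_nonunique (T : X → X) (hT : Continuous T)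
    (hM : (Minv T).Nonempty) (f g : C(X, ℝ)) (μ₁ μ₂ : ProbabilityMeasure X)
    (h₁ : μ₁ ∈ MMax T f) (h₂ : μ₂ ∈ MMax T f) (hne : μ₁ ≠ μ₂)
    (hg : intf g μ₁ ≠ intf g μ₂) :
    limsup (fun τ : ℝ => (beta T (f + τ • g) - beta T f) / τ) (𝓝[<] 0) <
      liminf (fun τ : ℝ => (beta T (f + τ • g) - beta T f) / τ) (𝓝[>] 0) ∧
    ¬ DifferentiableAt ℝ (fun τ : ℝ => beta T (f + τ • g)) 0 := by
  have hkey : limsup (fun τ : ℝ => (beta T (f + τ • g) - beta T f) / τ) (𝓝[<] 0) <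
      liminf (fun τ : ℝ => (beta T (f + τ • g) - beta T f) / τ) (𝓝[>] 0) := by
    rcases hg.lt_or_gt with h | h
    · exact key T hM f g μ₁ μ₂ h₁ h₂ h
    · exact key T hM f g μ₂ μ₁ h₂ h₁ h
  refine ⟨hkey, fun hdiff => ?_⟩
  set F : ℝ → ℝ := fun τ => beta T (f + τ • g) with hF
  have hF0 : F 0 = beta T f := by
    simp only [hF, zero_smul, add_zero]
  have hslope : Tendsto (slope F 0) (𝓝[≠] 0) (𝓝 (deriv F 0)) :=
    hasDerivAt_iff_tendsto_slope.mp hdiff.hasDerivAt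
  have heq : (fun τ : ℝ => (beta T (f + τ • g) - beta T f) / τ) = slope F 0 := by
    ext τ
    rw [slope_def_field, hF0, sub_zero]
  have hlt : 𝓝[<] (0:ℝ) ≤ 𝓝[≠] 0 :=
    nhdsWithin_mono 0 fun x hx => ne_of_lt hx
  have hgt : 𝓝[>] (0:ℝ) ≤ 𝓝[≠] 0 :=
    nhdsWithin_mono 0 fun x hx => ne_of_gt hx
  have e1 : limsup (slope F 0) (𝓝[<] 0) = deriv F 0 :=
    (hslope.mono_left hlt).limsup_eq
  have e2 : liminf (slope F 0) (𝓝[>] 0) = deriv F 0 :=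
    (hslope.mono_left hgt).liminf_eq
  rw [heq, e1, e2] at hkey
  exact lt_irrefl _ hkey
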